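/- For every integer p ≥ 5 and every α ∈ {p, p+2}, there exists a 2-iterated pushdown automaton with input alphabet {b, w} that accepts a word u if and only if u = (φ(σ_p^k(W)))^α for some natural number k; these are exactly the contour words of the balls of the tiling {p,4} (for α = p) and of the tiling {p+2,3} (for α = p+2) of the hyperbolic plane, both of which are spanned sector-wise by the tree generated by the rules W → BW^{p−3}, B → BW^{p−4}. -/

import Mathlib

/-- Operations on a 2-level iterated pushdown store. -/
inductive Op (Γ : Type*) where
  | pop1 : Op Γ
  | pop2 : Op Γ
  | push1 : List Γ → Op Γ
  | push2 : List Γ → Op Γ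

/-- A 2-level pushdown store: a finite list of entries `(A, s)` with `A` a letter of `Γ`
and `s ∈ Γ*` the inner store of the entry. -/
abbrev Store (Γ : Type*) := List (Γ × List Γ)

/-- The top symbols of a 2-level store: the letter of the top entry followed by the first
letter of its inner store when that inner store is nonempty; an element of `Γ ∪ Γ²`. -/
def topsym {Γ : Type*} : Store Γ → List Γ
  | [] => []
  | (A, s) :: _ => A :: s.take 1

/-- Apply an operation to a 2-level store (a partial operation):
`pop1` removes the top entry; `pop2` removes the first letter of the inner store of the
top entry (when nonempty); `push1 w` replaces the top entry `(A, s)` by the entries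
`(w_1, s), …, (w_m, s)`; `push2 u` replaces the top entry `(A, s)` by `(A, u ++ s)`. -/
def applyOp {Γ : Type*} : Op Γ → Store Γ → Option (Store Γ)
  | .pop1, _ :: rest => some rest
  | .pop2, (A, _ :: s) :: rest => some ((A, s) :: rest)
  | .push1 w, (_, s) :: rest => some (w.map (fun x => (x, s)) ++ rest)
  | .push2 u, (A, s) :: rest => some ((A, u ++ s) :: rest)
  | _, _ => none

/-- A 2-iterated pushdown automaton with state set `Q`, input alphabet `In` and store
alphabet `Γ`: an initial state `q0`, an initial store symbol `Z`, and a transition table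
`δ` assigning to each triple `(q, a, t)` — with `a ∈ In ∪ {ε}` and `t ∈ Γ ∪ Γ²` — a
finite set (list) of instructions `(q', op)`. -/
structure IPDA2 (Q In Γ : Type*) where
  q0 : Q
  Z : Γ
  δ : Q → Option In → List Γ → List (Q × Op Γ)

/-- A configuration: current state, remaining input word, current 2-level store. -/
abbrev Config (Q In Γ : Type*) := Q × List In × Store Γ

/-- One computation step: an instruction from `δ(q, a, topsym ω)` may be applied, where
`a = ε` (no input consumed) or `a` is the first letter of the remaining input (which is
then consumed); the state changes to `q'` and the operation is applied to the store. -/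
inductive IPDA2.Step {Q In Γ : Type*} (M : IPDA2 Q In Γ) :
    Config Q In Γ → Config Q In Γ → Prop
  | eps {q q' : Q} {w : List In} {ω ω' : Store Γ} {op : Op Γ} :
      (q', op) ∈ M.δ q none (topsym ω) → applyOp op ω = some ω' →
      M.Step (q, w, ω) (q', w, ω')
  | read {q q' : Q} {a : In} {w : List In} {ω ω' : Store Γ} {op : Op Γ} :
      (q', op) ∈ M.δ q (some a) (topsym ω) → applyOp op ω = some ω' →
      M.Step (q, a :: w, ω) (q', w, ω')

/-- A finite sequence of computation steps. -/
def IPDA2.Steps {Q In Γ : Type*} (M : IPDA2 Q In Γ) :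
    Config Q In Γ → Config Q In Γ → Prop :=
  Relation.ReflTransGen M.Step

/-- Acceptance: some finite sequence of steps leads from the initial configuration
`(q0, w, [(Z, ε)])` to a configuration with empty remaining input and empty store. -/
def IPDA2.Accepts {Q In Γ : Type*} (M : IPDA2 Q In Γ) (w : List In) : Prop :=
  ∃ q : Q, M.Steps (M.q0, w, [(M.Z, [])]) (q, [], [])

/-- The two-letter alphabet `{B, W}` of node labels. -/
inductive BW where
  | B : BW
  | W : BW
  deriving DecidableEq

/-- The substitution `σ` determined by `σ(B) = BW` and `σ(W) = BWW`, on letters. -/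
def sigmaLetter : BW → List BW
  | .B => [.B, .W]
  | .W => [.B, .W, .W]

/-- The substitution `σ` extended to words (monoid morphism of words). -/
def sigmaWord (w : List BW) : List BW := w.flatMap sigmaLetter

/-- The two-letter input alphabet `{b, w}`. -/
inductive bw where
  | b : bw
  | w : bw
  deriving DecidableEq

/-- The letter renaming `φ : B ↦ b, W ↦ w`. -/
def phi : BW → bw
  | .B => .b
  | .W => .w

/-- For `p ≥ 5`, the substitution `σ_p` determined by `σ_p(W) = BW^{p−3}` and
`σ_p(B) = BW^{p−4}`, on letters. -/
def sigmaPLetter (p : ℕ) : BW → List BW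
  | .W => BW.B :: List.replicate (p - 3) BW.W
  | .B => BW.B :: List.replicate (p - 4) BW.W

/-- The substitution `σ_p` extended to words (monoid morphism of words). -/
def sigmaPWord (p : ℕ) (w : List BW) : List BW := w.flatMap (sigmaPLetter p)


/-! ### Auxiliary construction: a concrete 2-iterated pushdown automaton -/

section ContourAux

/-- States: an initial guessing state, a running state, an expansion state. -/
inductive CSt where
  | init | run | expand
  deriving DecidableEq

instance : Fintype CSt :=
  Fintype.ofList [.init, .run, .expand] (fun x => by cases x <;> simp)

/-- Store alphabet: initial symbol `Z`, a unary counter symbol `I`, letters for `B`, `W`. -/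
inductive CGam where
  | Z | I | gB | gW
  deriving DecidableEq

instance : Fintype CGam :=
  Fintype.ofList [.Z, .I, .gB, .gW] (fun x => by cases x <;> simp)

def cemb : BW → CGam
  | .B => .gB
  | .W => .gW

def ctoL : CGam → List BW
  | .gB => [BW.B]
  | .gW => [BW.W]
  | _ => []

theorem ctoL_cemb (x : BW) : ctoL (cemb x) = [x] := by cases x <;> rfl

/-- Transition table. -/
def cdelta (p α : ℕ) : CSt → Option bw → List CGam → List (CSt × Op CGam)
  | .init, none, .Z :: _ =>
      [(.init, .push2 [.I]), (.run, .push1 (List.replicate α .gW))]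
  | .run, some .b, [.gB] => [(.run, .pop1)]
  | .run, some .w, [.gW] => [(.run, .pop1)]
  | .run, none, [.gB, .I] => [(.expand, .pop2)]
  | .run, none, [.gW, .I] => [(.expand, .pop2)]
  | .expand, none, .gB :: _ => [(.run, .push1 ((sigmaPLetter p BW.B).map cemb))]
  | .expand, none, .gW :: _ => [(.run, .push1 ((sigmaPLetter p BW.W).map cemb))]
  | _, _, _ => []

def cM (p α : ℕ) : IPDA2 CSt bw CGam := ⟨.init, .Z, cdelta p α⟩

theorem citer_nil (p n : ℕ) : (sigmaPWord p)^[n] [] = [] := by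
  induction n with
  | zero => rfl
  | succ n ih => rw [Function.iterate_succ_apply]; simpa [sigmaPWord] using ih

theorem citer_append (p n : ℕ) (u v : List BW) :
    (sigmaPWord p)^[n] (u ++ v) = (sigmaPWord p)^[n] u ++ (sigmaPWord p)^[n] v := by
  induction n generalizing u v with
  | zero => simp
  | succ n ih =>
      rw [Function.iterate_succ_apply, Function.iterate_succ_apply,
        Function.iterate_succ_apply]
      have h : sigmaPWord p (u ++ v) = sigmaPWord p u ++ sigmaPWord p v :=
        List.flatMap_append
      rw [h]
      exact ih _ _

theorem citer_flatMap (p n : ℕ) (L : List BW) :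
    (sigmaPWord p)^[n] L = L.flatMap (fun x => (sigmaPWord p)^[n] [x]) := by
  induction L with
  | nil => simp [citer_nil]
  | cons a L ih =>
      have h : (a :: L) = [a] ++ L := rfl
      rw [h, citer_append, ih]; simp

theorem citer_succ_single (p n : ℕ) (A : BW) :
    (sigmaPWord p)^[n+1] [A]
      = (sigmaPLetter p A).flatMap (fun x => (sigmaPWord p)^[n] [x]) := by
  rw [Function.iterate_succ_apply]
  have h : sigmaPWord p [A] = sigmaPLetter p A := by simp [sigmaPWord]
  rw [h, citer_flatMap]

/-- Value of a single store entry. -/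
def cvalE (p : ℕ) (e : CGam × List CGam) : List bw :=
  (((sigmaPWord p)^[e.2.length]) (ctoL e.1)).map phi

/-- Value of a store in the running state. -/
def cval (p : ℕ) (ω : Store CGam) : List bw := ω.flatMap (cvalE p)

/-- Value of a store in the expansion state (top entry counts one extra level). -/
def cvexp (p : ℕ) : Store CGam → List bw
  | [] => []
  | (A, s) :: rest => (((sigmaPWord p)^[s.length + 1]) (ctoL A)).map phi ++ cval p rest

theorem cval_append (p : ℕ) (u v : Store CGam) :
    cval p (u ++ v) = cval p u ++ cval p v := List.flatMap_append

theorem cval_map (p : ℕ) (s : List CGam) (L : List BW) :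
    cval p (L.map (fun x => (cemb x, s)))
      = (L.flatMap (fun x => (sigmaPWord p)^[s.length] [x])).map phi := by
  induction L with
  | nil => rfl
  | cons a L ih =>
      simp only [List.map_cons, cval, List.flatMap_cons, List.map_append] at ih ⊢
      rw [ih, cvalE, ctoL_cemb]

theorem cval_expand (p : ℕ) (A : BW) (s : List CGam) (rest : Store CGam) :
    cval p (((sigmaPLetter p A).map cemb).map (fun x => (x, s)) ++ rest)
      = (((sigmaPWord p)^[s.length + 1]) [A]).map phi ++ cval p rest := by
  rw [cval_append, List.map_map]
  have h : ((fun x => (x, s)) ∘ cemb) = (fun x : BW => (cemb x, s)) := rfl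
  rw [h, cval_map, citer_succ_single, List.map_flatMap]

theorem cval_replicate (p n : ℕ) (e : CGam × List CGam) :
    cval p (List.replicate n e) = (List.replicate n (cvalE p e)).flatten := by
  induction n with
  | zero => rfl
  | succ n ih => simp only [List.replicate_succ, cval, List.flatMap_cons,
      List.flatten_cons] at ih ⊢; rw [ih]

/-! ### Completeness -/

theorem step_read (p α : ℕ) (A : BW) (w : List bw) (ω : Store CGam) :
    (cM p α).Step (.run, phi A :: w, (cemb A, []) :: ω) (.run, w, ω) := by
  cases A
  · exact .read (op := .pop1) (by simp [cM, cdelta, topsym, cemb, phi])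
      (by simp [applyOp])
  · exact .read (op := .pop1) (by simp [cM, cdelta, topsym, cemb, phi])
      (by simp [applyOp])

theorem process_list_of (p α d : ℕ)
    (hs : ∀ (A : BW) (w : List bw) (ω : Store CGam),
      (cM p α).Steps
        (.run, (((sigmaPWord p)^[d]) [A]).map phi ++ w,
          (cemb A, List.replicate d .I) :: ω)
        (.run, w, ω)) :
    ∀ (L : List BW) (w : List bw) (ω : Store CGam),
      (cM p α).Steps
        (.run, (L.flatMap (fun x => (((sigmaPWord p)^[d]) [x]).map phi)) ++ w,
          L.map (fun x => (cemb x, List.replicate d .I)) ++ ω)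
        (.run, w, ω) := by
  intro L
  induction L with
  | nil =>
      intro w ω
      simp only [List.flatMap_nil, List.nil_append, List.map_nil]
      exact .refl
  | cons a L ih =>
      intro w ω
      refine Relation.ReflTransGen.trans ?_ (ih w ω)
      have h := hs a ((L.flatMap (fun x => (((sigmaPWord p)^[d]) [x]).map phi)) ++ w)
        (L.map (fun x => (cemb x, List.replicate d .I)) ++ ω)
      simpa [List.flatMap_cons, List.append_assoc, IPDA2.Steps] using h

theorem process_single (p α : ℕ) : ∀ (d : ℕ) (A : BW) (w : List bw) (ω : Store CGam),
    (cM p α).Steps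
      (.run, (((sigmaPWord p)^[d]) [A]).map phi ++ w,
        (cemb A, List.replicate d .I) :: ω)
      (.run, w, ω) := by
  intro d
  induction d with
  | zero =>
      intro A w ω
      apply Relation.ReflTransGen.single
      simpa using step_read p α A w ω
  | succ d ih =>
      intro A w ω
      have h1 : (cM p α).Step
          (.run, (((sigmaPWord p)^[d+1]) [A]).map phi ++ w,
            (cemb A, List.replicate (d+1) .I) :: ω)
          (.expand, (((sigmaPWord p)^[d+1]) [A]).map phi ++ w,
            (cemb A, List.replicate d .I) :: ω) := by
        cases A
        · exact .eps (op := .pop2)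
            (by simp [cM, cdelta, topsym, cemb, List.replicate_succ])
            (by simp [applyOp, List.replicate_succ])
        · exact .eps (op := .pop2)
            (by simp [cM, cdelta, topsym, cemb, List.replicate_succ])
            (by simp [applyOp, List.replicate_succ])
      have h2 : (cM p α).Step
          (.expand, (((sigmaPWord p)^[d+1]) [A]).map phi ++ w,
            (cemb A, List.replicate d .I) :: ω)
          (.run, (((sigmaPWord p)^[d+1]) [A]).map phi ++ w,
            ((sigmaPLetter p A).map cemb).map
              (fun x => (x, List.replicate d .I)) ++ ω) := by
        cases A
        · exact .eps (op := .push1 ((sigmaPLetter p BW.B).map cemb))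
            (by simp [cM, cdelta, topsym, cemb]) (by simp [applyOp])
        · exact .eps (op := .push1 ((sigmaPLetter p BW.W).map cemb))
            (by simp [cM, cdelta, topsym, cemb]) (by simp [applyOp])
      refine Relation.ReflTransGen.head h1 (Relation.ReflTransGen.head h2 ?_)
      have h3 := process_list_of p α d ih (sigmaPLetter p A) w ω
      have hin : (((sigmaPWord p)^[d+1]) [A]).map phi
          = (sigmaPLetter p A).flatMap
              (fun x => (((sigmaPWord p)^[d]) [x]).map phi) := by
        rw [citer_succ_single, List.map_flatMap]
      have hst : ((sigmaPLetter p A).map cemb).map (fun x => (x, List.replicate d .I))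
          = (sigmaPLetter p A).map (fun x => (cemb x, List.replicate d (CGam.I))) := by
        rw [List.map_map]; rfl
      rw [hin, hst]
      exact h3

theorem init_steps (p α : ℕ) (u : List bw) : ∀ k : ℕ,
    (cM p α).Steps (.init, u, [(.Z, [])]) (.init, u, [(.Z, List.replicate k .I)]) := by
  intro k
  induction k with
  | zero => exact .refl
  | succ k ih =>
      refine ih.tail ?_
      exact .eps (op := .push2 [.I]) (by simp [cM, cdelta, topsym])
        (by simp [applyOp, List.replicate_succ])

theorem accepts_target (p α k : ℕ) :
    (cM p α).Accepts
      ((List.replicate α (((sigmaPWord p)^[k] [BW.W]).map phi)).flatten) := by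
  refine ⟨.run, ?_⟩
  refine (init_steps p α _ k).trans ?_
  refine Relation.ReflTransGen.head
    (b := (.run, (List.replicate α (((sigmaPWord p)^[k] [BW.W]).map phi)).flatten,
      (List.replicate α CGam.gW).map (fun x => (x, List.replicate k CGam.I)) ++ []))
    (.eps (op := .push1 (List.replicate α .gW))
      (by simp [cM, cdelta, topsym]) (by simp [applyOp])) ?_
  have h := process_list_of p α k (process_single p α k) (List.replicate α BW.W) [] []
  have hin : (List.replicate α BW.W).flatMap
        (fun x => (((sigmaPWord p)^[k]) [x]).map phi) ++ ([] : List bw)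
      = (List.replicate α (((sigmaPWord p)^[k] [BW.W]).map phi)).flatten := by
    simp [List.flatMap, List.map_replicate]
  have hst : (List.replicate α BW.W).map
        (fun x => (cemb x, List.replicate k (CGam.I))) ++ ([] : Store CGam)
      = (List.replicate α CGam.gW).map (fun x => (x, List.replicate k CGam.I))
        ++ ([] : Store CGam) := by
    simp [List.map_replicate, cemb]
  rw [hin, hst] at h
  exact h

/-! ### Soundness -/

theorem csound (p α : ℕ) :
    ∀ (c : Config CSt bw CGam) (qf : CSt), (cM p α).Steps c (qf, [], []) →
      (∀ w s, c = (.init, w, [(.Z, s)]) →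
          ∃ k, w = (List.replicate α (((sigmaPWord p)^[k] [BW.W]).map phi)).flatten)
      ∧ (∀ w ω, c = (.run, w, ω) → w = cval p ω)
      ∧ (∀ w ω, c = (.expand, w, ω) → w = cvexp p ω) := by
  intro c qf h
  induction h using Relation.ReflTransGen.head_induction_on with
  | refl =>
      refine ⟨?_, ?_, ?_⟩
      · intro w s heq; simp at heq
      · intro w ω heq
        injection heq with h1 h2; injection h2 with h2 h3
        subst h2; subst h3; simp [cval]
      · intro w ω heq
        injection heq with h1 h2; injection h2 with h2 h3
        subst h2; subst h3; simp [cvexp]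
  | head hstep hrest ih =>
      refine ⟨?_, ?_, ?_⟩
      · -- from the initial state
        intro w s heq; subst heq
        cases hstep with
        | eps hmem happ =>
            simp [cM, cdelta, topsym] at hmem
            rcases hmem with ⟨rfl, rfl⟩ | ⟨rfl, rfl⟩
            · simp only [applyOp, List.cons_append, List.nil_append,
                Option.some.injEq] at happ
              subst happ
              exact ih.1 w (.I :: s) rfl
            · simp only [applyOp, Option.some.injEq] at happ
              subst happ
              refine ⟨s.length, ?_⟩
              rw [ih.2.1 w _ rfl]
              have hmap : (List.replicate α CGam.gW).map (fun x => (x, s))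
                  = List.replicate α (CGam.gW, s) := by simp [List.map_replicate]
              rw [List.append_nil, hmap, cval_replicate]
              rfl
        | read hmem happ =>
            rename_i a₀ w₀ ω₀ op₀
            cases a₀ <;> simp [cM, cdelta, topsym] at hmem
      · -- from the running state
        intro w ω heq; subst heq
        cases hstep with
        | eps hmem happ =>
            rcases ω with _ | ⟨⟨A, s⟩, rest⟩
            · simp [cM, cdelta, topsym] at hmem
            · rcases s with _ | ⟨x, s⟩
              · cases A <;> simp [cM, cdelta, topsym] at hmem
              · cases A <;> cases x <;>
                  simp [cM, cdelta, topsym, List.take_succ_cons, List.take_zero]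
                    at hmem <;>
                  · obtain ⟨rfl, rfl⟩ := hmem
                    simp only [applyOp, Option.some.injEq] at happ
                    subst happ
                    rw [ih.2.2 w _ rfl]
                    simp [cvexp, cval, cvalE, ctoL]
        | read hmem happ =>
            rename_i a₀ w₀ ω₀ op₀
            rcases ω with _ | ⟨⟨A, s⟩, rest⟩
            · cases a₀ <;> simp [cM, cdelta, topsym] at hmem
            · rcases s with _ | ⟨x, s⟩
              · cases A <;> cases a₀ <;>
                  simp [cM, cdelta, topsym] at hmem <;>
                  · obtain ⟨rfl, rfl⟩ := hmem
                    simp only [applyOp, Option.some.injEq] at happ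
                    subst happ
                    rw [ih.2.1 _ _ rfl]
                    simp [cval, cvalE, ctoL, phi]
              · cases A <;> cases a₀ <;> cases x <;>
                  simp [cM, cdelta, topsym, List.take_succ_cons, List.take_zero]
                    at hmem
      · -- from the expansion state
        intro w ω heq; subst heq
        cases hstep with
        | eps hmem happ =>
            rcases ω with _ | ⟨⟨A, s⟩, rest⟩
            · simp [cM, cdelta, topsym] at hmem
            · cases A <;> simp [cM, cdelta, topsym] at hmem <;>
                · obtain ⟨rfl, rfl⟩ := hmem
                  simp only [applyOp, Option.some.injEq] at happ
                  subst happ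
                  rw [ih.2.1 w _ rfl, cval_expand]
                  simp [cvexp, ctoL]
        | read hmem happ =>
            rename_i a₀ w₀ ω₀ op₀
            rcases ω with _ | ⟨⟨A, s⟩, rest⟩
            · cases a₀ <;> simp [cM, cdelta, topsym] at hmem
            · cases A <;> cases a₀ <;> simp [cM, cdelta, topsym] at hmem

end ContourAux

/-- For every integer `p ≥ 5` and every `α ∈ {p, p+2}`, there is a 2-iterated pushdown
automaton with input alphabet `{b, w}` that accepts a word `u` if and only if
`u = (φ(σ_p^k(W)))^α` for some `k : ℕ` — exactly the contour words of the balls of the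
tiling `{p,4}` (for `α = p`) and of the tiling `{p+2,3}` (for `α = p+2`) of the
hyperbolic plane, both spanned sector-wise by the tree generated by the rules
`W → BW^{p−3}`, `B → BW^{p−4}`. -/
theorem exists_ipda2_contour_language_p4_and_p2_3 (p α : ℕ) (hp : 5 ≤ p)
    (hα : α = p ∨ α = p + 2) :
    ∃ (Q Γ : Type) (_ : Fintype Q) (_ : Fintype Γ) (M : IPDA2 Q bw Γ),
      ∀ u : List bw,
        M.Accepts u ↔
          ∃ k : ℕ, u = (List.replicate α (((sigmaPWord p)^[k] [BW.W]).map phi)).flatten := by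
  refine ⟨CSt, CGam, inferInstance, inferInstance, cM p α, fun u => ⟨?_, ?_⟩⟩
  · rintro ⟨q, h⟩
    exact (csound p α _ q h).1 u [] rfl
  · rintro ⟨k, rfl⟩
    exact accepts_target p α k
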